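/- For every nonnegative integer r, every n ∈ {2, …, N} and every f ∈ ℂ^N, the best approximation error satisfies E_n(f) ≤ (2 sin(1/2))^{−r} · Σ_{k=n+1}^{N} ω_r(f, λ_k^{−1/2}) (the sum being empty, hence zero, for n = N). -/

import Mathlib

open Matrix

noncomputable section

/-- Euclidean (2-)norm on `ℂ^N`. -/
def cnorm2 {N : ℕ} (f : Fin N → ℂ) : ℝ := Real.sqrt (∑ i, ‖f i‖ ^ 2)

/-- The spectral operator `Σ_j c_j u_j u_j^*`. -/
def specOp {N : ℕ} (u : Fin N → Fin N → ℂ) (c : Fin N → ℂ) : Matrix (Fin N) (Fin N) ℂ :=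
  ∑ j, c j • Matrix.vecMulVec (u j) (star (u j))

/-- The graph translation operator `T_s = Σ_j e^{i s √λ_j} u_j u_j^*`. -/
def Tmat {N : ℕ} (u : Fin N → Fin N → ℂ) (lam : Fin N → ℝ) (s : ℝ) :
    Matrix (Fin N) (Fin N) ℂ :=
  specOp u (fun j => Complex.exp (Complex.I * (s : ℂ) * (Real.sqrt (lam j) : ℂ)))

/-- The `r`-th modulus of smoothness `ω_r(f,t) = sup_{|s| ≤ t} ‖(T_s - I)^r f‖₂`. -/
def omegaMod {N : ℕ} (u : Fin N → Fin N → ℂ) (lam : Fin N → ℝ) (r : ℕ) (f : Fin N → ℂ)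
    (t : ℝ) : ℝ :=
  ⨆ s : {s : ℝ // |s| ≤ t}, cnorm2 (((Tmat u lam s.1 - 1) ^ r).mulVec f)

/-- The Paley–Wiener space `PW_{λ_n} = span(u_1, …, u_n)`. -/
def PWspace {N : ℕ} (u : Fin N → Fin N → ℂ) (n : ℕ) : Submodule ℂ (Fin N → ℂ) :=
  Submodule.span ℂ {g | ∃ j : Fin N, (j : ℕ) < n ∧ g = u j}

/-- The best approximation error `E_n(f) = min_{g ∈ PW_{λ_n}} ‖f - g‖₂`. -/
def bestErr {N : ℕ} (u : Fin N → Fin N → ℂ) (n : ℕ) (f : Fin N → ℂ) : ℝ :=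
  sInf {y : ℝ | ∃ g ∈ PWspace u n, y = cnorm2 (f - g)}

namespace Stmt4Aux

variable {N : ℕ}

def toE (v : Fin N → ℂ) : EuclideanSpace ℂ (Fin N) :=
  (WithLp.linearEquiv 2 ℂ (Fin N → ℂ)).symm v

lemma cnorm2_eq (v : Fin N → ℂ) : cnorm2 v = ‖toE v‖ := by
  rw [EuclideanSpace.norm_eq]; rfl

lemma inner_eq (x y : Fin N → ℂ) : (inner ℂ (toE x) (toE y) : ℂ) = star x ⬝ᵥ y := by
  simp [toE, PiLp.inner_apply, dotProduct, RCLike.inner_apply, Complex.star_def, mul_comm]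

lemma complete (u : Fin N → Fin N → ℂ)
    (hu : ∀ i j, star (u i) ⬝ᵥ u j = if i = j then 1 else 0)
    (v : Fin N → ℂ) (i : Fin N) :
    ∑ j, (star (u j) ⬝ᵥ v) * u j i = v i := by
  have hUU : (Matrix.of u) * (Matrix.of u)ᴴ = 1 := by
    ext a b
    rw [Matrix.mul_apply, Matrix.one_apply]
    have := hu b a
    simp only [dotProduct, Pi.star_apply] at this
    simp only [Matrix.conjTranspose_apply, Matrix.of_apply]
    rw [show (if a = b then (1:ℂ) else 0) = if b = a then 1 else 0 by simp [eq_comm], ← this]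
    exact Finset.sum_congr rfl fun k _ => mul_comm _ _
  have hVU : (Matrix.of u)ᴴ * (Matrix.of u) = 1 := mul_eq_one_comm.mp hUU
  have key : ∀ k : Fin N, ∑ j, star (u j k) * u j i = if k = i then 1 else 0 := by
    intro k
    have := congrFun (congrFun hVU k) i
    simpa [Matrix.mul_apply, Matrix.conjTranspose_apply, Matrix.one_apply] using this
  calc ∑ j, (star (u j) ⬝ᵥ v) * u j i
      = ∑ k, v k * ∑ j, star (u j k) * u j i := by
        simp only [dotProduct, Pi.star_apply, Finset.sum_mul, Finset.mul_sum]
        rw [Finset.sum_comm]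
        exact Finset.sum_congr rfl fun k _ => Finset.sum_congr rfl fun j _ => by ring
    _ = v i := by simp only [Complex.star_def] at key; simp [key]

lemma vecMulVec_mulVec (w x v : Fin N → ℂ) :
    (Matrix.vecMulVec w x).mulVec v = (x ⬝ᵥ v) • w := by
  ext i
  simp only [Matrix.mulVec, Matrix.vecMulVec_apply, dotProduct, Pi.smul_apply, smul_eq_mul,
    Finset.sum_mul, Finset.mul_sum]
  exact Finset.sum_congr rfl fun j _ => by ring

lemma sum_mulVec' {ι : Type*} (S : Finset ι) (A : ι → Matrix (Fin N) (Fin N) ℂ)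
    (v : Fin N → ℂ) : (∑ k ∈ S, A k).mulVec v = ∑ k ∈ S, (A k).mulVec v := by
  ext i
  simp only [Matrix.mulVec, dotProduct, Finset.sum_apply, Matrix.sum_apply, Finset.sum_mul]
  rw [Finset.sum_comm]

lemma coeff_specOp (u : Fin N → Fin N → ℂ)
    (hu : ∀ i j, star (u i) ⬝ᵥ u j = if i = j then 1 else 0)
    (c : Fin N → ℂ) (v : Fin N → ℂ) (j : Fin N) :
    star (u j) ⬝ᵥ (specOp u c).mulVec v = c j * (star (u j) ⬝ᵥ v) := by
  unfold specOp
  rw [sum_mulVec']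
  simp only [Matrix.smul_mulVec, vecMulVec_mulVec]
  have hds : star (u j) ⬝ᵥ (∑ x, c x • (star (u x) ⬝ᵥ v) • u x)
      = ∑ x, star (u j) ⬝ᵥ (c x • (star (u x) ⬝ᵥ v) • u x) := by
    simp only [dotProduct, Finset.sum_apply, Finset.mul_sum]
    rw [Finset.sum_comm]
  rw [hds]
  simp only [smul_smul, dotProduct_smul, smul_eq_mul, hu]
  simp [Finset.sum_ite_eq, mul_comm]

lemma coeff_T (u : Fin N → Fin N → ℂ)
    (hu : ∀ i j, star (u i) ⬝ᵥ u j = if i = j then 1 else 0)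
    (lam : Fin N → ℝ) (s : ℝ) (r : ℕ) (f : Fin N → ℂ) (j : Fin N) :
    star (u j) ⬝ᵥ (((Tmat u lam s - 1) ^ r).mulVec f)
      = (Complex.exp (Complex.I * (s : ℂ) * (Real.sqrt (lam j) : ℂ)) - 1) ^ r
          * (star (u j) ⬝ᵥ f) := by
  induction r generalizing f with
  | zero => simp
  | succ r ih =>
    rw [pow_succ, ← Matrix.mulVec_mulVec, ih]
    rw [Matrix.sub_mulVec, dotProduct_sub, Matrix.one_mulVec]
    rw [show (Tmat u lam s) = specOp u
        (fun j => Complex.exp (Complex.I * (s : ℂ) * (Real.sqrt (lam j) : ℂ))) from rfl,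
      coeff_specOp u hu]
    ring

lemma cnorm2_u (u : Fin N → Fin N → ℂ)
    (hu : ∀ i j, star (u i) ⬝ᵥ u j = if i = j then 1 else 0) (j : Fin N) :
    cnorm2 (u j) = 1 := by
  have h : (inner ℂ (toE (u j)) (toE (u j)) : ℂ) = 1 := by rw [inner_eq]; simp [hu j j]
  have h2 : (‖toE (u j)‖ : ℝ) ^ 2 = 1 := by
    have := inner_self_eq_norm_sq (𝕜 := ℂ) (toE (u j))
    rw [h] at this
    exact_mod_cast this.symm
  rw [cnorm2_eq]
  nlinarith [norm_nonneg (toE (u j))]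

lemma coeff_le (u : Fin N → Fin N → ℂ)
    (hu : ∀ i j, star (u i) ⬝ᵥ u j = if i = j then 1 else 0) (j : Fin N)
    (w : Fin N → ℂ) : ‖star (u j) ⬝ᵥ w‖ ≤ cnorm2 w := by
  have := norm_inner_le_norm (𝕜 := ℂ) (toE (u j)) (toE w)
  rw [inner_eq] at this
  rw [cnorm2_eq]
  have hn : ‖toE (u j)‖ = 1 := by rw [← cnorm2_eq]; exact cnorm2_u u hu j
  simpa [hn] using this

lemma cnorm2_sum_smul_le (u : Fin N → Fin N → ℂ)
    (hu : ∀ i j, star (u i) ⬝ᵥ u j = if i = j then 1 else 0)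
    (b : Fin N → ℂ) (S : Finset (Fin N)) :
    cnorm2 (∑ j ∈ S, b j • u j) ≤ ∑ j ∈ S, ‖b j‖ := by
  rw [cnorm2_eq]
  have : toE (∑ j ∈ S, b j • u j) = ∑ j ∈ S, b j • toE (u j) := by
    simp [toE, map_sum]
  rw [this]
  refine (norm_sum_le _ _).trans ?_
  refine Finset.sum_le_sum fun j _ => ?_
  rw [norm_smul, ← cnorm2_eq, cnorm2_u u hu j]
  simp

lemma abs_exp_I_mul (s x : ℝ) :
    ‖Complex.exp (Complex.I * (s : ℂ) * (x : ℂ))‖ = 1 := by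
  rw [Complex.norm_exp]
  simp [Complex.mul_re]

lemma abs_exp_I_sub_one : ‖Complex.exp Complex.I - 1‖ = 2 * Real.sin (1/2) := by
  have hre : (Complex.exp Complex.I - 1).re = Real.cos 1 - 1 := by
    simp [Complex.exp_re]
  have him : (Complex.exp Complex.I - 1).im = Real.sin 1 := by
    simp [Complex.exp_im]
  rw [Complex.norm_def, Complex.normSq_apply, hre, him]
  have hcos : Real.cos 1 = 1 - 2 * Real.sin (1/2) ^ 2 := by
    have := Real.cos_two_mul (1/2)
    norm_num at this
    have h2 := Real.sin_sq_add_cos_sq (1/2)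
    nlinarith
  have hs : (0:ℝ) ≤ Real.sin (1/2) :=
    Real.sin_nonneg_of_nonneg_of_le_pi (by norm_num) (by nlinarith [Real.pi_gt_three])
  have hsq : (Real.cos 1 - 1) * (Real.cos 1 - 1) + Real.sin 1 * Real.sin 1
      = (2 * Real.sin (1/2)) ^ 2 := by
    have h1 := Real.sin_sq_add_cos_sq 1
    nlinarith
  rw [hsq, Real.sqrt_sq (by linarith)]

lemma omega_bdd (u : Fin N → Fin N → ℂ)
    (hu : ∀ i j, star (u i) ⬝ᵥ u j = if i = j then 1 else 0)
    (lam : Fin N → ℝ) (r : ℕ) (f : Fin N → ℂ) (t : ℝ) :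
    BddAbove (Set.range fun s : {s : ℝ // |s| ≤ t} =>
      cnorm2 (((Tmat u lam s.1 - 1) ^ r).mulVec f)) := by
  refine ⟨∑ j, 2 ^ r * ‖star (u j) ⬝ᵥ f‖, ?_⟩
  rintro x ⟨s, rfl⟩
  dsimp only
  have hw : ((Tmat u lam s.1 - 1) ^ r).mulVec f
      = ∑ j, ((Complex.exp (Complex.I * (s.1 : ℂ) * (Real.sqrt (lam j) : ℂ)) - 1) ^ r
          * (star (u j) ⬝ᵥ f)) • u j := by
    funext i
    rw [← complete u hu (((Tmat u lam s.1 - 1) ^ r).mulVec f) i]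
    simp only [Finset.sum_apply, Pi.smul_apply, smul_eq_mul]
    exact Finset.sum_congr rfl fun j _ => by rw [coeff_T u hu lam s.1 r f j]
  rw [hw]
  refine (cnorm2_sum_smul_le u hu _ _).trans ?_
  refine Finset.sum_le_sum fun j _ => ?_
  rw [norm_mul, norm_pow]
  have hc : ‖Complex.exp (Complex.I * (s.1 : ℂ) * (Real.sqrt (lam j) : ℂ)) - 1‖
      ≤ 2 := by
    calc ‖Complex.exp (Complex.I * (s.1 : ℂ) * (Real.sqrt (lam j) : ℂ)) - 1‖
        ≤ ‖Complex.exp (Complex.I * (s.1 : ℂ) * (Real.sqrt (lam j) : ℂ))‖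
            + ‖(1:ℂ)‖ := by
          simpa using
            norm_sub_le (Complex.exp (Complex.I * (s.1 : ℂ) * (Real.sqrt (lam j) : ℂ))) 1
      _ = 2 := by rw [abs_exp_I_mul]; simp; norm_num
  gcongr

end Stmt4Aux

/-- For every nonnegative integer `r`, every `n ∈ {2, …, N}` and every
`f ∈ ℂ^N`, `E_n(f) ≤ (2 sin(1/2))^{-r} · Σ_{k=n+1}^{N} ω_r(f, λ_k^{-1/2})`
(the sum over `k ∈ {n+1, …, N}` is written as a sum over the indices `j : Fin N`
with `n ≤ j`, i.e. `k = j + 1`; it is empty for `n = N`). -/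
theorem stmt4
    (N : ℕ) (hN : 2 ≤ N)
    (u : Fin N → Fin N → ℂ)
    (hu : ∀ i j, star (u i) ⬝ᵥ u j = if i = j then 1 else 0)
    (lam : Fin N → ℝ) (hmono : Monotone lam)
    (hlam0 : lam ⟨0, by omega⟩ = 0) (hlam1 : 0 < lam ⟨1, by omega⟩)
    (r : ℕ) (n : ℕ) (hn2 : 2 ≤ n) (hnN : n ≤ N) (f : Fin N → ℂ) :
    bestErr u n f ≤
      ((2 * Real.sin (1 / 2))⁻¹) ^ r *
        ∑ j ∈ Finset.univ.filter (fun j : Fin N => n ≤ (j : ℕ)),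
          omegaMod u lam r f (lam j ^ (-(1 : ℝ) / 2)) := by
  classical
  set a : Fin N → ℂ := fun j => star (u j) ⬝ᵥ f with ha
  have hsin : (0:ℝ) < 2 * Real.sin (1/2) := by
    have : (0:ℝ) < Real.sin (1/2) :=
      Real.sin_pos_of_pos_of_lt_pi (by norm_num) (by nlinarith [Real.pi_gt_three])
    linarith
  set g : Fin N → ℂ := ∑ j ∈ Finset.univ.filter (fun j : Fin N => (j:ℕ) < n), a j • u j
    with hgdef
  have hg : g ∈ PWspace u n := by
    refine Submodule.sum_mem _ fun j hj => Submodule.smul_mem _ _ (Submodule.subset_span ?_)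
    exact ⟨j, (Finset.mem_filter.mp hj).2, rfl⟩
  have hfg : f - g = ∑ j ∈ Finset.univ.filter (fun j : Fin N => n ≤ (j:ℕ)), a j • u j := by
    funext i
    have hc := Stmt4Aux.complete u hu f i
    have hsplit := Finset.sum_filter_add_sum_filter_not Finset.univ
      (fun j : Fin N => n ≤ (j:ℕ)) (fun j => a j * u j i)
    have hcompl : Finset.univ.filter (fun j : Fin N => ¬ n ≤ (j:ℕ))
        = Finset.univ.filter (fun j : Fin N => (j:ℕ) < n) := by
      apply Finset.filter_congr
      intro j _
      simp [Nat.not_le]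
    rw [hcompl] at hsplit
    simp only [Pi.sub_apply, hgdef, Finset.sum_apply, Pi.smul_apply, smul_eq_mul]
    have hfi : f i = (∑ j ∈ Finset.univ.filter (fun j : Fin N => n ≤ (j:ℕ)), a j * u j i)
        + ∑ j ∈ Finset.univ.filter (fun j : Fin N => (j:ℕ) < n), a j * u j i := by
      rw [hsplit, hc]
    rw [hfi]
    ring
  have h1 : bestErr u n f
      ≤ ∑ j ∈ Finset.univ.filter (fun j : Fin N => n ≤ (j:ℕ)), ‖a j‖ := by
    have hle : cnorm2 (f - g)
        ≤ ∑ j ∈ Finset.univ.filter (fun j : Fin N => n ≤ (j:ℕ)), ‖a j‖ := by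
      rw [hfg]; exact Stmt4Aux.cnorm2_sum_smul_le u hu a _
    refine le_trans (csInf_le ?_ ⟨g, hg, rfl⟩) hle
    exact ⟨0, by rintro y ⟨g', -, rfl⟩; exact Real.sqrt_nonneg _⟩
  refine h1.trans ?_
  rw [Finset.mul_sum]
  refine Finset.sum_le_sum fun j hj => ?_
  have hjn : n ≤ (j:ℕ) := (Finset.mem_filter.mp hj).2
  have h1j : (⟨1, by omega⟩ : Fin N) ≤ j := by
    rw [Fin.le_def]
    show 1 ≤ (j : ℕ)
    omega
  have hlamj : 0 < lam j := lt_of_lt_of_le hlam1 (hmono h1j)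
  set t : ℝ := lam j ^ (-(1 : ℝ) / 2) with htdef
  have ht : 0 < t := Real.rpow_pos_of_pos hlamj _
  have hst : t * Real.sqrt (lam j) = 1 := by
    rw [Real.sqrt_eq_rpow, htdef, ← Real.rpow_add hlamj]
    norm_num
  have hcoef : star (u j) ⬝ᵥ (((Tmat u lam t - 1) ^ r).mulVec f)
      = (Complex.exp Complex.I - 1) ^ r * a j := by
    rw [Stmt4Aux.coeff_T u hu lam t r f j]
    congr 3
    rw [mul_assoc, ← Complex.ofReal_mul, hst]
    simp
  have hb : ‖(Complex.exp Complex.I - 1) ^ r * a j‖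
      ≤ cnorm2 (((Tmat u lam t - 1) ^ r).mulVec f) := by
    rw [← hcoef]; exact Stmt4Aux.coeff_le u hu j _
  have habs : ‖(Complex.exp Complex.I - 1) ^ r * a j‖
      = (2 * Real.sin (1/2)) ^ r * ‖a j‖ := by
    rw [norm_mul, norm_pow, Stmt4Aux.abs_exp_I_sub_one]
  have hω : cnorm2 (((Tmat u lam t - 1) ^ r).mulVec f) ≤ omegaMod u lam r f t :=
    le_ciSup (Stmt4Aux.omega_bdd u hu lam r f t) ⟨t, by rw [abs_of_pos ht]⟩
  have hfin : (2 * Real.sin (1/2)) ^ r * ‖a j‖ ≤ omegaMod u lam r f t := by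
    rw [← habs]; exact hb.trans hω
  rw [inv_pow, inv_mul_eq_div, le_div_iff₀ (pow_pos hsin r), mul_comm]
  exact hfin
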